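/- arXiv:2510.25575 — 2 statements merged into one kernel-verified Lean document; each statement's English description precedes it below -/
import Mathlib

section
/- Let A be a finite-dimensional hereditary algebra over F_q of finite representation type, with complete set of indecomposables I₁, …, I_m ordered so that Hom_A(I_s, I_t) = 0 for s > t. For N = ⊕_{t=1}^m I_t^{⊕ r_t} with N_t := I_t^{⊕ r_t}, any filtration 0 = M_m ⊆ ⋯ ⊆ M₀ = N with M_{i−1}/M_i ≅ N_i satisfies M_i = ⊕_{t > i} N_t; in particular F^N_{N₁,…,N_m}(q) = 1. -/
variable {A : Type} [Ring A]

/-- A filtration `0 = M_m ⊆ ⋯ ⊆ M₀ = M` of `M` with `M_{i-1}/M_i ≅ N_i`. -/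
def IsFiltrationBy {M : Type} [AddCommGroup M] [Module A M] {m : ℕ}
    (N : Fin m → Type) [∀ i, AddCommGroup (N i)] [∀ i, Module A (N i)]
    (f : Fin (m + 1) → Submodule A M) : Prop :=
  f 0 = ⊤ ∧ f (Fin.last m) = ⊥ ∧ (∀ i : Fin m, f i.succ ≤ f i.castSucc) ∧
    ∀ i : Fin m, Nonempty
      (((f i.castSucc) ⧸ ((f i.succ).comap (f i.castSucc).subtype)) ≃ₗ[A] N i)

/-- The submodule of `Π t, (Fin (r t) → I t)` of elements supported on indices
`t` with `i ≤ (t : ℕ)`, i.e. `⊕_{t ≥ i} I_t^{⊕ r_t}`. -/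
def suppFrom {m : ℕ} (I : Fin m → Type) [∀ t, AddCommGroup (I t)]
    [∀ t, Module A (I t)] (r : Fin m → ℕ) (i : ℕ) :
    Submodule A (∀ t, Fin (r t) → I t) where
  carrier := {x | ∀ t : Fin m, (t : ℕ) < i → x t = 0}
  add_mem' := by intro x y hx hy t ht; simp [hx t ht, hy t ht]
  zero_mem' := by intro t _; rfl
  smul_mem' := by intro a x hx t ht; simp [hx t ht]

section Aux

variable {m : ℕ} (I : Fin m → Type) [∀ t, AddCommGroup (I t)] [∀ t, Module A (I t)]
  (r : Fin m → ℕ)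

lemma mem_suppFrom {x : ∀ t, Fin (r t) → I t} {i : ℕ} :
    x ∈ suppFrom (A := A) I r i ↔ ∀ t : Fin m, (t : ℕ) < i → x t = 0 := Iff.rfl

lemma suppFrom_zero : suppFrom (A := A) I r 0 = ⊤ := by
  ext x; simp [mem_suppFrom]

lemma suppFrom_last : suppFrom (A := A) I r m = ⊥ := by
  ext x
  simp only [mem_suppFrom, Submodule.mem_bot]
  constructor
  · intro h; funext t; exact h t t.isLt
  · intro h t _; simp [h]

lemma suppFrom_antitone {i j : ℕ} (h : i ≤ j) : suppFrom (A := A) I r j ≤ suppFrom (A := A) I r i :=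
  fun _ hx t ht => hx t (lt_of_lt_of_le ht h)

/-- Any linear map from a finite power of `M` to `P` is zero if all maps `M → P` are. -/
lemma pi_hom_zero {M P : Type} [AddCommGroup M] [Module A M] [AddCommGroup P] [Module A P]
    {n : ℕ} (h : ∀ φ : M →ₗ[A] P, φ = 0) (ψ : (Fin n → M) →ₗ[A] P) : ψ = 0 := by
  refine LinearMap.ext fun x => ?_
  have hx : x = ∑ k : Fin n, Pi.single k (x k) := (Finset.univ_sum_single x).symm
  rw [LinearMap.zero_apply, hx, map_sum]
  refine Finset.sum_eq_zero fun k _ => ?_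
  have : ψ.comp (LinearMap.single A (fun _ : Fin n => M) k) = 0 := h _
  have := LinearMap.congr_fun this (x k)
  simpa using this

/-- The projection from `suppFrom i` onto the `i`-th slice, giving the canonical
quotient isomorphism. -/
lemma suppFrom_quot_equiv (i : Fin m) :
    Nonempty ((suppFrom (A := A) I r (i : ℕ) ⧸
        ((suppFrom (A := A) I r ((i : ℕ) + 1)).comap (suppFrom (A := A) I r (i : ℕ)).subtype))
      ≃ₗ[A] (Fin (r i) → I i)) := by
  set p : (suppFrom (A := A) I r (i : ℕ)) →ₗ[A] (Fin (r i) → I i) :=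
    (LinearMap.proj i).comp (suppFrom (A := A) I r (i : ℕ)).subtype with hp
  have hsurj : Function.Surjective p := by
    intro y
    have hmem : (Pi.single i y : ∀ t, Fin (r t) → I t) ∈ suppFrom (A := A) I r (i : ℕ) := by
      intro t ht
      have hne : t ≠ i := by intro h; subst h; exact lt_irrefl _ ht
      exact Pi.single_eq_of_ne (M := fun t => Fin (r t) → I t) hne y
    exact ⟨⟨Pi.single i y, hmem⟩, by simp [hp]⟩
  have hker : LinearMap.ker p =
      (suppFrom (A := A) I r ((i : ℕ) + 1)).comap (suppFrom (A := A) I r (i : ℕ)).subtype := by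
    ext ⟨x, hx⟩
    simp only [LinearMap.mem_ker, Submodule.mem_comap, hp, LinearMap.comp_apply,
      Submodule.subtype_apply, LinearMap.proj_apply, mem_suppFrom]
    constructor
    · intro h t ht
      rcases lt_or_eq_of_le (Nat.lt_succ_iff.mp ht) with ht' | ht'
      · exact hx t ht'
      · have : t = i := Fin.ext ht'
        subst this; exact h
    · intro h; exact h i (Nat.lt_succ_self _)
  exact ⟨(Submodule.quotEquivOfEq _ _ hker.symm).trans (p.quotKerEquivOfSurjective hsurj)⟩

/-- Cardinality relation for a submodule and quotient of a finite module. -/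
lemma card_eq_card_quot_mul_card {G : Type} [AddCommGroup G] [Module A G]
    (S : Submodule A G) (T : Submodule A S) :
    Nat.card S = Nat.card (S ⧸ T) * Nat.card T :=
  AddSubgroup.card_eq_card_quotient_mul_card_addSubgroup T.toAddSubgroup

lemma submodule_eq_of_le_of_card_le {G : Type} [AddCommGroup G] [Module A G] [Finite G]
    {S T : Submodule A G} (h : S ≤ T) (hc : Nat.card T ≤ Nat.card S) : S = T := by
  have hs : (S : Set G) = (T : Set G) := by
    apply Set.eq_of_subset_of_ncard_le h
    rwa [← Nat.card_coe_set_eq, ← Nat.card_coe_set_eq]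
  exact SetLike.coe_injective hs

/-- Homs out of the tail of the filtration into earlier indecomposables vanish. -/
lemma hom_zero_of_filtration {M : Type} [AddCommGroup M] [Module A M]
    (hHom : ∀ s t : Fin m, t < s → ∀ φ : I s →ₗ[A] I t, φ = 0)
    (f : Fin (m + 1) → Submodule A M)
    (hf : IsFiltrationBy (A := A) (fun t => Fin (r t) → I t) f) :
    ∀ j : Fin (m + 1), ∀ t : Fin m, (t : ℕ) < (j : ℕ) →
      ∀ φ : (f j) →ₗ[A] I t, φ = 0 := by
  obtain ⟨-, hbot, hle, hquot⟩ := hf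
  intro j
  induction j using Fin.reverseInduction with
  | last =>
    intro t _ φ
    refine LinearMap.ext fun x => ?_
    have hx : (x : M) ∈ (⊥ : Submodule A M) := by rw [← hbot]; exact x.2
    have : x = 0 := Subtype.ext (Submodule.mem_bot A |>.mp hx)
    simp [this]
  | cast i ih =>
    intro t ht φ
    have hti : (t : ℕ) < (i : ℕ) := by simpa using ht
    have hker : (f i.succ).comap (f i.castSucc).subtype ≤ LinearMap.ker φ := by
      rintro ⟨x, hx⟩ hmem
      simp only [Submodule.mem_comap, Submodule.subtype_apply] at hmem
      have h0 : φ.comp (Submodule.inclusion (hle i)) = 0 :=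
        ih t (by simp [Fin.val_succ]; omega) _
      have := LinearMap.congr_fun h0 ⟨x, hmem⟩
      simp only [LinearMap.comp_apply, LinearMap.zero_apply] at this; exact this
    obtain ⟨e⟩ := hquot i
    set φ' := Submodule.liftQ _ φ hker with hφ'def
    have hcomp : φ'.comp e.symm.toLinearMap = 0 :=
      pi_hom_zero (hHom i t (by exact hti)) _
    have hφ' : φ' = 0 := by
      refine LinearMap.ext fun q => ?_
      have := LinearMap.congr_fun hcomp (e q)
      simpa using this
    have : φ = φ'.comp (Submodule.mkQ _) := (Submodule.liftQ_mkQ _ φ hker).symm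
    rw [this, hφ']
    ext x
    simp

end Aux

/-- Let `I₁, …, I_m` be the indecomposables of a representation-finite
hereditary `F_q`-algebra (here: any family of finite modules), ordered so that
`Hom_A(I_s, I_t) = 0` for `s > t`.  For `N = ⊕_t I_t^{⊕ r_t}` with slices
`N_t = I_t^{⊕ r_t}`, any filtration `0 = M_m ⊆ ⋯ ⊆ M₀ = N` with `M_{i-1}/M_i ≅ N_i`
satisfies `M_i = ⊕_{t > i} N_t`; in particular the number of such filtrations is
`F^N_{N₁,…,N_m}(q) = 1`. -/
theorem filtration_of_directed_sum_unique
    {m : ℕ} (I : Fin m → Type) [∀ t, AddCommGroup (I t)] [∀ t, Module A (I t)]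
    [∀ t, Finite (I t)]
    (hHom : ∀ s t : Fin m, t < s → ∀ φ : I s →ₗ[A] I t, φ = 0)
    (r : Fin m → ℕ) :
    (∀ f : Fin (m + 1) → Submodule A (∀ t, Fin (r t) → I t),
      IsFiltrationBy (fun t => Fin (r t) → I t) f →
        ∀ i : Fin (m + 1), f i = suppFrom I r i) ∧
    Nat.card {f : Fin (m + 1) → Submodule A (∀ t, Fin (r t) → I t) //
      IsFiltrationBy (fun t => Fin (r t) → I t) f} = 1 := by
  have part1 : ∀ f : Fin (m + 1) → Submodule A (∀ t, Fin (r t) → I t),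
      IsFiltrationBy (fun t => Fin (r t) → I t) f →
        ∀ i : Fin (m + 1), f i = suppFrom I r i := by
    intro f hf i
    have hQ := hom_zero_of_filtration I r hHom f hf
    obtain ⟨htop, hbot, hle, hquot⟩ := hf
    induction i using Fin.induction with
    | zero => rw [htop]; exact (suppFrom_zero I r).symm
    | succ i ih =>
      rw [show ((i.succ : Fin (m + 1)) : ℕ) = (i : ℕ) + 1 from rfl]
      rw [show ((i.castSucc : Fin (m + 1)) : ℕ) = (i : ℕ) from rfl] at ih
      have hsub : f i.succ ≤ suppFrom I r ((i : ℕ) + 1) := by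
        intro x hx t ht
        by_cases h : (t : ℕ) < (i : ℕ)
        · have hx' : x ∈ f i.castSucc := hle i hx
          rw [ih] at hx'
          exact hx' t h
        · have hti : t = i := Fin.ext (by omega)
          subst hti
          funext k
          have hφ : ((LinearMap.proj k).comp
              ((LinearMap.proj t).comp (f t.succ).subtype) : (f t.succ) →ₗ[A] I t) = 0 :=
            hQ t.succ t (by simp) _
          have := LinearMap.congr_fun hφ ⟨x, hx⟩
          simpa using this
      refine le_antisymm hsub (submodule_eq_of_le_of_card_le hsub ?_).ge
      -- cardinality comparison
      obtain ⟨e⟩ := hquot i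
      have card1 : Nat.card (f i.castSucc) =
          Nat.card (Fin (r i) → I i) * Nat.card (f i.succ) := by
        rw [card_eq_card_quot_mul_card (f i.castSucc) ((f i.succ).comap (f i.castSucc).subtype),
          Nat.card_congr e.toEquiv,
          Nat.card_congr (Submodule.comapSubtypeEquivOfLe (hle i)).toEquiv]
      obtain ⟨e'⟩ := suppFrom_quot_equiv (A := A) I r i
      have card2 : Nat.card (suppFrom (A := A) I r (i : ℕ)) =
          Nat.card (Fin (r i) → I i) * Nat.card (suppFrom (A := A) I r ((i : ℕ) + 1)) := by
        rw [card_eq_card_quot_mul_card (suppFrom (A := A) I r (i : ℕ))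
            ((suppFrom (A := A) I r ((i : ℕ) + 1)).comap (suppFrom (A := A) I r (i : ℕ)).subtype),
          Nat.card_congr e'.toEquiv,
          Nat.card_congr (Submodule.comapSubtypeEquivOfLe
            (suppFrom_antitone I r (Nat.le_succ _))).toEquiv]
      rw [ih] at card1
      have hpos : 0 < Nat.card (Fin (r i) → I i) := Nat.card_pos
      have : Nat.card (suppFrom (A := A) I r ((i : ℕ) + 1)) = Nat.card (f i.succ) :=
        Nat.eq_of_mul_eq_mul_left hpos (card2.symm.trans card1)
      exact this.le
  refine ⟨part1, ?_⟩
  have hex : IsFiltrationBy (A := A) (fun t => Fin (r t) → I t)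
      (fun i : Fin (m + 1) => suppFrom I r i) := by
    refine ⟨?_, ?_, ?_, ?_⟩
    · exact suppFrom_zero I r
    · exact suppFrom_last I r
    · intro i
      exact suppFrom_antitone I r (by simp [Fin.val_succ])
    · intro i
      have := suppFrom_quot_equiv (A := A) I r i
      simpa [Fin.val_succ, Fin.coe_castSucc] using this
  rw [Nat.card_eq_one_iff_unique]
  constructor
  · exact ⟨fun ⟨f, hf⟩ ⟨g, hg⟩ => Subtype.ext
      (funext fun i => (part1 f hf i).trans (part1 g hg i).symm)⟩
  · exact ⟨⟨_, hex⟩⟩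
end

section
/- Let A be a finite-dimensional algebra over F_q, let M, N₁, …, N_m be finite A-modules with dim M = Σ dim N_i, and realize these as points in representation varieties with orbits O_M, O_{N_i} under groups G_V, G_{V_{N_i}} of F_q-points. Fix a flag of graded subspaces W_• with subquotients of the dimension vectors of the N_i, with parabolic stabilizer P ≤ G_V and unipotent radical U. Let Y_N ⊆ E be the set of representations preserving the flag whose induced subquotient representations equal the fixed representatives x_i of the N_i. Then F^M_{N₁,…,N_m}(q) = a_M · |Y_N ∩ O_M| / (∏_{i=1}^m a_{N_i} · |U|), where a_M = |Aut_A(M)| and a_{N_i} = |Aut_A(N_i)|. -/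
open scoped BigOperators

open scoped BigOperators

namespace FiltAux

/-- Counting via fibers of constant cardinality. -/
lemma card_fibers {α β : Type*} [Finite α] [Finite β] (φ : α → β) (n : ℕ)
    (h : ∀ b, Nat.card {a // φ a = b} = n) : Nat.card α = Nat.card β * n := by
  classical
  have hβ : Fintype β := Fintype.ofFinite β
  have hα : Fintype α := Fintype.ofFinite α
  rw [← Nat.card_congr (Equiv.sigmaFiberEquiv φ), Nat.card_eq_fintype_card,
    Fintype.card_sigma, Nat.card_eq_fintype_card]
  have h' : ∀ b, Fintype.card {a // φ a = b} = n := fun b => by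
    rw [← Nat.card_eq_fintype_card]; exact h b
  simp [h', Finset.sum_const, mul_comm]

/-- Conjugation by a unit, as an algebra homomorphism. -/
def conjA {R S : Type*} [CommSemiring R] [Semiring S] [Algebra R S] (g : Sˣ) : S →ₐ[R] S where
  toFun x := ↑g * x * ↑g⁻¹
  map_one' := by simp
  map_mul' x y := by
    simp only [mul_assoc]
    rw [Units.inv_mul_cancel_left]
  map_zero' := by simp
  map_add' x y := by simp [mul_add, add_mul]
  commutes' r := by
    show ↑g * algebraMap R S r * ↑g⁻¹ = algebraMap R S r
    rw [← Algebra.commutes r ((g : S)), mul_assoc, Units.mul_inv, mul_one]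

@[simp] lemma conjA_apply {R S : Type*} [CommSemiring R] [Semiring S] [Algebra R S] (g : Sˣ)
    (x : S) : conjA (R := R) g x = ↑g * x * ↑g⁻¹ := rfl

variable {R M : Type*} [CommRing R] [AddCommGroup M] [Module R M]

/-- A unit of the endomorphism ring as a linear equivalence. -/
def uEquiv (g : (Module.End R M)ˣ) : M ≃ₗ[R] M :=
  { (g : Module.End R M) with
    invFun := ((g⁻¹ : (Module.End R M)ˣ) : Module.End R M)
    left_inv := fun x => by
      show ((g⁻¹ : (Module.End R M)ˣ) : Module.End R M) ((g : Module.End R M) x) = x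
      rw [← Module.End.mul_apply, Units.inv_mul]; rfl
    right_inv := fun x => by
      show (g : Module.End R M) (((g⁻¹ : (Module.End R M)ˣ) : Module.End R M) x) = x
      rw [← Module.End.mul_apply, Units.mul_inv]; rfl }

@[simp] lemma uEquiv_apply (g : (Module.End R M)ˣ) (x : M) : uEquiv g x = (g : Module.End R M) x := rfl

/-- A linear automorphism as a unit of the endomorphism ring. -/
def eUnit (e : M ≃ₗ[R] M) : (Module.End R M)ˣ where
  val := e
  inv := e.symm
  val_inv := LinearMap.ext fun x => e.apply_symm_apply x
  inv_val := LinearMap.ext fun x => e.symm_apply_apply x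

@[simp] lemma eUnit_apply (e : M ≃ₗ[R] M) (x : M) : ((eUnit e : (Module.End R M)ˣ) : Module.End R M) x = e x := rfl

@[simp] lemma eUnit_inv_apply (e : M ≃ₗ[R] M) (x : M) :
    (((eUnit e)⁻¹ : (Module.End R M)ˣ) : Module.End R M) x = e.symm x := rfl

lemma unit_injective (g : (Module.End R M)ˣ) : Function.Injective (g : Module.End R M) :=
  (uEquiv g).injective

lemma unit_surjective (g : (Module.End R M)ˣ) : Function.Surjective (g : Module.End R M) :=
  (uEquiv g).surjective

lemma unit_inv_apply_mem {g : (Module.End R M)ˣ} {p : Submodule R M}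
    (h : p.map (g : Module.End R M) = p) {x : M} (hx : x ∈ p) :
    ((g⁻¹ : (Module.End R M)ˣ) : Module.End R M) x ∈ p := by
  conv at hx => rw [← h]
  obtain ⟨y, hy, rfl⟩ := hx
  have : ((g⁻¹ : (Module.End R M)ˣ) : Module.End R M) ((g : Module.End R M) y) = y := by
    rw [← Module.End.mul_apply, Units.inv_mul]; rfl
  rwa [this]

lemma comap_unit_eq_of_map_eq {g : (Module.End R M)ˣ} {p : Submodule R M}
    (h : p.map (g : Module.End R M) = p) : p.comap (g : Module.End R M) = p := by
  conv_lhs => rw [← h]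
  exact Submodule.comap_map_eq_of_injective (unit_injective g) p

lemma map_comap_unit (g : (Module.End R M)ˣ) (p : Submodule R M) :
    (p.comap (g : Module.End R M)).map (g : Module.End R M) = p :=
  Submodule.map_comap_eq_of_surjective (unit_surjective g) p

end FiltAux

namespace FiltAux
variable {R M : Type*} [CommRing R] [AddCommGroup M] [Module R M]

lemma unit_apply_inv (g : (Module.End R M)ˣ) (x : M) :
    (g : Module.End R M) (((g⁻¹ : (Module.End R M)ˣ) : Module.End R M) x) = x := by
  rw [← Module.End.mul_apply, Units.mul_inv]; rfl

lemma unit_inv_apply (g : (Module.End R M)ˣ) (x : M) :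
    ((g⁻¹ : (Module.End R M)ˣ) : Module.End R M) ((g : Module.End R M) x) = x := by
  rw [← Module.End.mul_apply, Units.inv_mul]; rfl

lemma unit_inv_apply_mem' {g : (Module.End R M)ˣ} {p q : Submodule R M}
    (h : p.map (g : Module.End R M) = q) {x : M} (hx : x ∈ q) :
    ((g⁻¹ : (Module.End R M)ˣ) : Module.End R M) x ∈ p := by
  subst h
  obtain ⟨y, hy, rfl⟩ := hx
  rwa [unit_inv_apply]

lemma mul_unit_apply (g h : (Module.End R M)ˣ) (x : M) :
    ((g * h : (Module.End R M)ˣ) : Module.End R M) x =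
      (g : Module.End R M) ((h : Module.End R M) x) := by
  simp only [Units.val_mul, Module.End.mul_apply]

lemma map_inv_eq_comap (g : (Module.End R M)ˣ) (p : Submodule R M) :
    p.map ((g⁻¹ : (Module.End R M)ˣ) : Module.End R M) = p.comap (g : Module.End R M) := by
  ext x
  constructor
  · rintro ⟨y, hy, rfl⟩
    show (g : Module.End R M) _ ∈ p
    rwa [unit_apply_inv]
  · intro hx
    exact ⟨(g : Module.End R M) x, hx, unit_inv_apply g x⟩

lemma map_unit_inv_eq {g : (Module.End R M)ˣ} {p : Submodule R M}
    (h : p.map (g : Module.End R M) = p) :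
    p.map ((g⁻¹ : (Module.End R M)ˣ) : Module.End R M) = p := by
  rw [map_inv_eq_comap, comap_unit_eq_of_map_eq h]

lemma units_conj_eq_iff {S : Type*} [Monoid S] (g g₁ : Sˣ) (r : S) :
    ↑g * r * ↑g⁻¹ = ↑g₁ * r * ↑g₁⁻¹ ↔ ↑(g₁⁻¹ * g) * r = r * ↑(g₁⁻¹ * g) := by
  rw [Units.val_mul]
  constructor
  · intro h
    have h2 := congrArg (fun z => (↑g₁⁻¹ : S) * z * ↑g) h
    simpa [mul_assoc] using h2
  · intro h
    have h2 := congrArg (fun z => (↑g₁ : S) * z * ↑g⁻¹) h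
    simp only [← mul_assoc] at h2 ⊢
    simpa [mul_assoc] using h2

end FiltAux

namespace FiltAux

variable {Fq : Type} [Field Fq] {m : ℕ} (Vn : Fin m → Type)
  [∀ i, AddCommGroup (Vn i)] [∀ i, Module Fq (Vn i)]

/-- The standard flag on a product of vector spaces. -/
def Fl (j : Fin (m + 1)) : Submodule Fq (∀ i, Vn i) where
  carrier := {v | ∀ i : Fin m, i.castSucc < j → v i = 0}
  add_mem' := fun ha hb i hi => by simp [ha i hi, hb i hi]
  zero_mem' := fun i _ => rfl
  smul_mem' := fun c a ha i hi => by simp [ha i hi]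

lemma mem_Fl {j : Fin (m + 1)} {v : ∀ i, Vn i} :
    v ∈ Fl (Fq := Fq) Vn j ↔ ∀ i : Fin m, i.castSucc < j → v i = 0 := Iff.rfl

lemma Fl_antitone {j k : Fin (m + 1)} (hjk : j ≤ k) :
    Fl (Fq := Fq) Vn k ≤ Fl (Fq := Fq) Vn j :=
  fun _ hv i hi => hv i (lt_of_lt_of_le hi hjk)

lemma exists_adapted_equiv
    (Fq : Type) [Field Fq]
    (V : Type) [AddCommGroup V] [Module Fq V] [FiniteDimensional Fq V]
    (m : ℕ) (Vn : Fin m → Type) [∀ i, AddCommGroup (Vn i)] [∀ i, Module Fq (Vn i)]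
    [∀ i, FiniteDimensional Fq (Vn i)]
    (hdim : Module.finrank Fq V = ∑ i, Module.finrank Fq (Vn i))
    (W : Fin (m + 1) → Submodule Fq V)
    (hWlast : W (Fin.last m) = ⊥)
    (hWmono : ∀ i : Fin m, W i.succ ≤ W i.castSucc)
    (π : ∀ i : Fin m, V →ₗ[Fq] Vn i)
    (hπsurj : ∀ i : Fin m, (W i.castSucc).map (π i) = ⊤)
    (hπker : ∀ i : Fin m, W i.castSucc ⊓ LinearMap.ker (π i) = W i.succ) :
    ∃ s : (∀ i, Vn i) ≃ₗ[Fq] V,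
      (∀ j, (Fl (Fq := Fq) Vn j).map (s : (∀ i, Vn i) →ₗ[Fq] V) = W j) ∧
      (∀ (i : Fin m) (v : ∀ k, Vn k), v ∈ Fl (Fq := Fq) Vn i.castSucc → π i (s v) = v i) := by
  classical
  have hant : Antitone W := Fin.antitone_iff_succ_le.2 hWmono
  -- linear sections of the `π i` with range inside `W i.castSucc`
  have hσ : ∀ i : Fin m, ∃ σ : Vn i →ₗ[Fq] V,
      (∀ v, σ v ∈ W i.castSucc) ∧ (∀ v, π i (σ v) = v) := by
    intro i
    set q : ↥(W i.castSucc) →ₗ[Fq] Vn i := (π i).comp (W i.castSucc).subtype with hq_def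
    have hq : LinearMap.range q = ⊤ := by
      rw [hq_def, LinearMap.range_comp, Submodule.range_subtype, hπsurj i]
    obtain ⟨τ, hτ⟩ := q.exists_rightInverse_of_surjective hq
    refine ⟨(W i.castSucc).subtype.comp τ, fun v => (τ v).2, fun v => ?_⟩
    have := DFunLike.congr_fun hτ v
    simpa [hq_def] using this
  choose σ hσmem hσsec using hσ
  -- the glued map
  set t : (∀ i, Vn i) →ₗ[Fq] V :=
    { toFun := fun v => ∑ i, σ i (v i)
      map_add' := fun a b => by
        simp only [Pi.add_apply, map_add]
        exact Finset.sum_add_distrib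
      map_smul' := fun c a => by
        simp only [Pi.smul_apply, map_smul, RingHom.id_apply]
        exact (Finset.smul_sum).symm } with ht_def
  have ht_apply : ∀ v, t v = ∑ i, σ i (v i) := fun v => rfl
  have ht_mem : ∀ (j) (v), v ∈ Fl (Fq := Fq) Vn j → t v ∈ W j := by
    intro j v hv
    rw [ht_apply]
    refine Submodule.sum_mem _ fun i _ => ?_
    by_cases h : i.castSucc < j
    · rw [hv i h, map_zero]; exact zero_mem _
    · exact hant (le_of_not_gt h) (hσmem i (v i))
  have htπ : ∀ (i : Fin m) (v), v ∈ Fl (Fq := Fq) Vn i.castSucc → π i (t v) = v i := by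
    intro i v hv
    rw [ht_apply, map_sum, Finset.sum_eq_single i]
    · exact hσsec i (v i)
    · intro k _ hk
      rcases lt_or_gt_of_ne hk with hlt | hgt
      · rw [hv k (Fin.castSucc_lt_castSucc_iff.2 hlt), map_zero, map_zero]
      · have h1 : i.succ ≤ k.castSucc := Fin.succ_le_castSucc_iff.2 hgt
        have h2 : σ k (v k) ∈ W i.succ := hant h1 (hσmem k (v k))
        have h3 : W i.succ ≤ LinearMap.ker (π i) := by
          rw [← hπker i]; exact inf_le_right
        exact h3 h2
    · intro h; exact absurd (Finset.mem_univ i) h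
  have hinj : Function.Injective t := by
    rw [← LinearMap.ker_eq_bot]
    rw [LinearMap.ker_eq_bot']
    intro v hv
    have key : ∀ n : ℕ, ∀ i : Fin m, i.val = n → v i = 0 := by
      intro n
      induction n using Nat.strong_induction_on with
      | _ n ih =>
        intro i hi
        have hmemFl : v ∈ Fl (Fq := Fq) Vn i.castSucc := by
          intro k hk
          exact ih k.val (hi ▸ Fin.castSucc_lt_castSucc_iff.1 hk) k rfl
        have := htπ i v hmemFl
        rw [hv, map_zero] at this
        exact this.symm
    funext i
    exact key i.val i rfl
  have hrank : Module.finrank Fq (∀ i, Vn i) = Module.finrank Fq V := by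
    rw [Module.finrank_pi_fintype, hdim]
  set s := LinearMap.linearEquivOfInjective t hinj hrank with hs_def
  have hs_apply : ∀ v, s v = t v := fun v => rfl
  have hsup : ∀ j, W j ≤ (Fl (Fq := Fq) Vn j).map (s : (∀ i, Vn i) →ₗ[Fq] V) := by
    intro j
    induction j using Fin.reverseInduction with
    | last => rw [hWlast]; exact bot_le
    | cast i ih =>
      intro w hw
      set v₁ : ∀ k, Vn k := Pi.single i (π i w) with hv₁_def
      have hv₁Fl : v₁ ∈ Fl (Fq := Fq) Vn i.castSucc := by
        intro k hk
        have hne : k ≠ i := ne_of_lt (Fin.castSucc_lt_castSucc_iff.1 hk)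
        simp [hv₁_def, Pi.single_eq_of_ne hne]
      have hker : w - t v₁ ∈ W i.succ := by
        rw [← hπker i]
        refine ⟨Submodule.sub_mem _ hw (ht_mem _ _ hv₁Fl), ?_⟩
        show w - t v₁ ∈ LinearMap.ker (π i)
        rw [LinearMap.mem_ker, map_sub, htπ i v₁ hv₁Fl, hv₁_def, Pi.single_eq_same, sub_self]
      obtain ⟨v₂, hv₂Fl, hv₂⟩ := ih hker
      refine ⟨v₁ + v₂, ?_, ?_⟩
      · intro k hk
        rw [Pi.add_apply, hv₁Fl k hk,
          hv₂Fl k (lt_trans hk Fin.castSucc_lt_succ), add_zero]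
      · show t (v₁ + v₂) = w
        have hv₂' : t v₂ = w - t v₁ := hv₂
        rw [map_add, hv₂']
        abel
  refine ⟨s, fun j => le_antisymm ?_ (hsup j), fun i v hv => htπ i v hv⟩
  rintro x ⟨v, hv, rfl⟩
  exact ht_mem j v hv

end FiltAux

/-- key counting formula for filtration numbers.  Modules over a
finite-dimensional `F_q`-algebra `A` are realized as points of representation
varieties: algebra maps `ρ : A →ₐ[F_q] End(V)`, acted on by conjugation by
`G_V = GL(V) = (End V)ˣ`.  Fix representatives `ρM` of `M` on `V` and `ρᵢ` of `Nᵢ`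
on `Vᵢ` with `dim V = Σ dim Vᵢ`, a flag `W_•` of subspaces of `V` with subquotients
identified with the `Vᵢ` via projections `πᵢ`, the parabolic stabilizer `P` with
unipotent radical `U` (elements preserving the flag and inducing the identity on the
subquotients), and `Y_N` the set of representations preserving the flag and inducing
exactly `ρᵢ` on the `i`-th subquotient.  Then
`F^M_{N₁,…,N_m}(q) · ∏ᵢ a_{Nᵢ} · |U| = a_M · |Y_N ∩ O_M|`,
i.e. `F^M_{N₁,…,N_m}(q) = a_M |Y_N ∩ O_M| / (∏ᵢ a_{Nᵢ} |U|)`. -/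
theorem filtration_count_formula
    (Fq : Type) [Field Fq] [Fintype Fq]
    (A : Type) [Ring A] [Algebra Fq A] [FiniteDimensional Fq A]
    (V : Type) [AddCommGroup V] [Module Fq V] [FiniteDimensional Fq V]
    (m : ℕ) (Vn : Fin m → Type) [∀ i, AddCommGroup (Vn i)] [∀ i, Module Fq (Vn i)]
    [∀ i, FiniteDimensional Fq (Vn i)]
    (hdim : Module.finrank Fq V = ∑ i, Module.finrank Fq (Vn i))
    -- representatives of the modules `M` and `N₁, …, N_m`
    (ρM : A →ₐ[Fq] Module.End Fq V)
    (ρn : ∀ i, A →ₐ[Fq] Module.End Fq (Vn i))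
    -- the fixed flag of graded subspaces with its subquotient identifications
    (W : Fin (m + 1) → Submodule Fq V)
    (hW0 : W 0 = ⊤) (hWlast : W (Fin.last m) = ⊥)
    (hWmono : ∀ i : Fin m, W i.succ ≤ W i.castSucc)
    (π : ∀ i : Fin m, V →ₗ[Fq] Vn i)
    (hπsurj : ∀ i : Fin m, (W i.castSucc).map (π i) = ⊤)
    (hπker : ∀ i : Fin m, W i.castSucc ⊓ LinearMap.ker (π i) = W i.succ) :
    -- `F^M_{N₁,…,N_m}(q)`, the number of `A`-stable filtrations of `(V, ρM)` with
    -- `i`-th subquotient isomorphic to `(Vᵢ, ρᵢ)`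
    Nat.card {f : Fin (m + 1) → Submodule Fq V //
        f 0 = ⊤ ∧ f (Fin.last m) = ⊥ ∧ (∀ i : Fin m, f i.succ ≤ f i.castSucc) ∧
        (∀ (i : Fin (m + 1)) (a : A), (f i).map (ρM a) ≤ f i) ∧
        (∀ i : Fin m, ∃ p : V →ₗ[Fq] Vn i,
          (f i.castSucc).map p = ⊤ ∧ f i.castSucc ⊓ LinearMap.ker p = f i.succ ∧
          ∀ (a : A) (x : V), x ∈ f i.castSucc → p (ρM a x) = ρn i a (p x))} *
      -- `∏ᵢ a_{Nᵢ}`, the orders of the automorphism groups of the `Nᵢ`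
      (∏ i, Nat.card {g : (Module.End Fq (Vn i))ˣ //
        ∀ a : A, (g : Module.End Fq (Vn i)) * ρn i a = ρn i a * g}) *
      -- `|U|`, the order of the unipotent radical of the parabolic
      Nat.card {g : (Module.End Fq V)ˣ //
        (∀ i : Fin (m + 1), (W i).map (g : Module.End Fq V) = W i) ∧
        (∀ (i : Fin m) (x : V), x ∈ W i.castSucc →
          π i ((g : Module.End Fq V) x) = π i x)} =
    -- `a_M`, the order of the automorphism group of `M`
    Nat.card {g : (Module.End Fq V)ˣ //
        ∀ a : A, (g : Module.End Fq V) * ρM a = ρM a * g} *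
      -- `|Y_N ∩ O_M|`
      Nat.card {ρ : A →ₐ[Fq] Module.End Fq V //
        ((∀ (i : Fin (m + 1)) (a : A), (W i).map (ρ a) ≤ W i) ∧
         (∀ (i : Fin m) (a : A) (x : V), x ∈ W i.castSucc →
            π i (ρ a x) = ρn i a (π i x))) ∧
        (∃ g : (Module.End Fq V)ˣ, ∀ a : A,
          ρ a = (g : Module.End Fq V) * ρM a * ((g⁻¹ : (Module.End Fq V)ˣ) :
            Module.End Fq V))} := by
  classical
  haveI : Finite A := Module.finite_of_finite Fq
  haveI : Finite V := Module.finite_of_finite Fq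
  haveI : ∀ i, Finite (Vn i) := fun i => Module.finite_of_finite Fq
  haveI : Finite (Module.End Fq V) :=
    Finite.of_injective (fun f => (f : V → V)) DFunLike.coe_injective
  haveI : ∀ i, Finite (Module.End Fq (Vn i)) := fun i =>
    Finite.of_injective (fun f => (f : Vn i → Vn i)) DFunLike.coe_injective
  haveI : Finite (A →ₐ[Fq] Module.End Fq V) :=
    Finite.of_injective (fun f => (f : A → Module.End Fq V)) DFunLike.coe_injective
  haveI : Finite (Submodule Fq V) :=
    Finite.of_injective (fun p => (p : Set V)) SetLike.coe_injective
  -- abbreviations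
  let G := (Module.End Fq V)ˣ
  let cj : G → (A →ₐ[Fq] Module.End Fq V) := fun g => (FiltAux.conjA g).comp ρM
  have cj_apply : ∀ (g : G) (a : A), cj g a =
      (g : Module.End Fq V) * ρM a * ((g⁻¹ : G) : Module.End Fq V) := fun _ _ => rfl
  have cj_app : ∀ (g : G) (a : A) (x : V), cj g a x =
      (g : Module.End Fq V) (ρM a (((g⁻¹ : G) : Module.End Fq V) x)) := by
    intro g a x
    rw [cj_apply, Module.End.mul_apply, Module.End.mul_apply]
  let YN : (A →ₐ[Fq] Module.End Fq V) → Prop := fun ρ =>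
    (∀ (i : Fin (m + 1)) (a : A), (W i).map (ρ a) ≤ W i) ∧
    (∀ (i : Fin m) (a : A) (x : V), x ∈ W i.castSucc → π i (ρ a x) = ρn i a (π i x))
  let QP : G → Prop := fun h =>
    (∀ i : Fin (m + 1), (W i).map (h : Module.End Fq V) = W i) ∧
    (∀ i : Fin m, ∃ u : (Module.End Fq (Vn i))ˣ,
      (∀ a : A, (u : Module.End Fq (Vn i)) * ρn i a = ρn i a * u) ∧
      (∀ x : V, x ∈ W i.castSucc →
        π i ((h : Module.End Fq V) x) = (u : Module.End Fq (Vn i)) (π i x)))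
  let FP : (Fin (m + 1) → Submodule Fq V) → Prop := fun f =>
    f 0 = ⊤ ∧ f (Fin.last m) = ⊥ ∧ (∀ i : Fin m, f i.succ ≤ f i.castSucc) ∧
    (∀ (i : Fin (m + 1)) (a : A), (f i).map (ρM a) ≤ f i) ∧
    (∀ i : Fin m, ∃ p : V →ₗ[Fq] Vn i,
      (f i.castSucc).map p = ⊤ ∧ f i.castSucc ⊓ LinearMap.ker p = f i.succ ∧
      ∀ (a : A) (x : V), x ∈ f i.castSucc → p (ρM a x) = ρn i a (p x))
  -- the adapted equivalence for the reference flag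
  obtain ⟨sW, hsWmap, hsWπ⟩ := FiltAux.exists_adapted_equiv Fq V m Vn hdim W hWlast hWmono π
    hπsurj hπker
  have hsW_memW : ∀ (j : Fin (m + 1)) (v : ∀ i, Vn i),
      v ∈ FiltAux.Fl (Fq := Fq) Vn j → sW v ∈ W j := by
    intro j v hv
    rw [← hsWmap j]
    exact ⟨v, hv, rfl⟩
  have hsW_pre : ∀ (j : Fin (m + 1)) (x : V), x ∈ W j →
      sW.symm x ∈ FiltAux.Fl (Fq := Fq) Vn j := by
    intro j x hx
    rw [← hsWmap j] at hx
    obtain ⟨v, hv, rfl⟩ := hx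
    rw [show sW.symm ((sW : (∀ i, Vn i) →ₗ[Fq] V) v) = v from sW.symm_apply_apply v]
    exact hv
  have hπW : ∀ (i : Fin m) (v : Vn i), ∃ x, x ∈ W i.castSucc ∧ π i x = v := by
    intro i v
    have hv : v ∈ (⊤ : Submodule Fq (Vn i)) := trivial
    rw [← hπsurj i] at hv
    obtain ⟨x, hx, hxv⟩ := hv
    exact ⟨x, hx, hxv⟩
  have hWsucc_ker : ∀ i : Fin m, W i.succ ≤ LinearMap.ker (π i) := fun i => by
    rw [← hπker i]; exact inf_le_right
  -- STEP 3 : |Q| = (∏ aᵢ) * |U|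
  have step3 : Nat.card {h : G // QP h} =
      (∏ i, Nat.card {g : (Module.End Fq (Vn i))ˣ //
        ∀ a : A, (g : Module.End Fq (Vn i)) * ρn i a = ρn i a * g}) *
      Nat.card {g : (Module.End Fq V)ˣ //
        (∀ i : Fin (m + 1), (W i).map (g : Module.End Fq V) = W i) ∧
        (∀ (i : Fin m) (x : V), x ∈ W i.castSucc →
          π i ((g : Module.End Fq V) x) = π i x)} := by
    have uniq3 : ∀ (i : Fin m) (h : G) (u u' : (Module.End Fq (Vn i))ˣ),
        (∀ x : V, x ∈ W i.castSucc →
          π i ((h : Module.End Fq V) x) = (u : Module.End Fq (Vn i)) (π i x)) →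
        (∀ x : V, x ∈ W i.castSucc →
          π i ((h : Module.End Fq V) x) = (u' : Module.End Fq (Vn i)) (π i x)) →
        u = u' := by
      intro i h u u' h1 h2
      refine Units.ext (LinearMap.ext fun v => ?_)
      obtain ⟨x, hx, rfl⟩ := hπW i v
      rw [← h1 x hx, h2 x hx]
    let AutN : Fin m → Type := fun i => {g : (Module.End Fq (Vn i))ˣ //
        ∀ a : A, (g : Module.End Fq (Vn i)) * ρn i a = ρn i a * g}
    let φ3 : {h : G // QP h} → (∀ i, AutN i) := fun h i =>
      ⟨(h.2.2 i).choose, (h.2.2 i).choose_spec.1⟩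
    have key : ∀ u : ∀ i, AutN i, Nat.card {p : {h : G // QP h} // φ3 p = u} =
        Nat.card {g : (Module.End Fq V)ˣ //
          (∀ i : Fin (m + 1), (W i).map (g : Module.End Fq V) = W i) ∧
          (∀ (i : Fin m) (x : V), x ∈ W i.castSucc →
            π i ((g : Module.End Fq V) x) = π i x)} := by
      intro u
      have e1 : {p : {h : G // QP h} // φ3 p = u} ≃
          {h : G // (∀ i : Fin (m + 1), (W i).map (h : Module.End Fq V) = W i) ∧
            (∀ (i : Fin m) (x : V), x ∈ W i.castSucc →
              π i ((h : Module.End Fq V) x) =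
                ((u i).1 : Module.End Fq (Vn i)) (π i x))} := by
        refine ⟨fun p => ⟨p.1.1, p.1.2.1, fun i x hx => ?_⟩,
                fun h => ⟨⟨h.1, h.2.1, fun i => ⟨(u i).1, (u i).2, h.2.2 i⟩⟩,
                  funext fun i => Subtype.ext ?_⟩,
                fun p => Subtype.ext (Subtype.ext rfl), fun h => Subtype.ext rfl⟩
        · have hc := (p.1.2.2 i).choose_spec.2 x hx
          have he : (p.1.2.2 i).choose = (u i).1 :=
            congrArg Subtype.val (congrFun p.2 i)
          rw [hc, he]
        · exact uniq3 i h.1 _ _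
            ((⟨(u i).1, (u i).2, h.2.2 i⟩ : ∃ w : (Module.End Fq (Vn i))ˣ,
              (∀ a : A, (w : Module.End Fq (Vn i)) * ρn i a = ρn i a * w) ∧
              (∀ x : V, x ∈ W i.castSucc →
                π i ((h.1 : Module.End Fq V) x) =
                  (w : Module.End Fq (Vn i)) (π i x))).choose_spec.2)
            (h.2.2 i)
      let uPi : (∀ i, Vn i) ≃ₗ[Fq] (∀ i, Vn i) :=
        LinearEquiv.piCongrRight fun i => FiltAux.uEquiv (u i).1
      have uPi_apply : ∀ (v : ∀ i, Vn i) (i : Fin m),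
          uPi v i = ((u i).1 : Module.End Fq (Vn i)) (v i) := fun v i => rfl
      have uPis_apply : ∀ (v : ∀ i, Vn i) (i : Fin m),
          uPi.symm v i =
            (((u i).1⁻¹ : (Module.End Fq (Vn i))ˣ) : Module.End Fq (Vn i)) (v i) :=
        fun v i => rfl
      have huPiFl : ∀ (j : Fin (m + 1)) (v : ∀ i, Vn i),
          v ∈ FiltAux.Fl (Fq := Fq) Vn j → uPi v ∈ FiltAux.Fl (Fq := Fq) Vn j := by
        intro j v hv k hk
        rw [uPi_apply, hv k hk, map_zero]
      have huPisFl : ∀ (j : Fin (m + 1)) (v : ∀ i, Vn i),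
          v ∈ FiltAux.Fl (Fq := Fq) Vn j → uPi.symm v ∈ FiltAux.Fl (Fq := Fq) Vn j := by
        intro j v hv k hk
        rw [uPis_apply, hv k hk, map_zero]
      let h₀ : G := FiltAux.eUnit ((sW.symm.trans uPi).trans sW)
      have h₀_flag : ∀ j : Fin (m + 1), (W j).map (h₀ : Module.End Fq V) = W j := by
        intro j
        refine le_antisymm ?_ ?_
        · rintro _ ⟨y, hy, rfl⟩
          show sW (uPi (sW.symm y)) ∈ W j
          exact hsW_memW j _ (huPiFl j _ (hsW_pre j y hy))
        · intro x hx
          refine ⟨((h₀⁻¹ : G) : Module.End Fq V) x, ?_, FiltAux.unit_apply_inv h₀ x⟩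
          show sW (uPi.symm (sW.symm x)) ∈ W j
          exact hsW_memW j _ (huPisFl j _ (hsW_pre j x hx))
      have h₀_sub : ∀ (i : Fin m) (x : V), x ∈ W i.castSucc →
          π i ((h₀ : Module.End Fq V) x) = ((u i).1 : Module.End Fq (Vn i)) (π i x) := by
        intro i x hx
        have hv := hsW_pre _ x hx
        have h1 : π i (sW (uPi (sW.symm x))) = uPi (sW.symm x) i :=
          hsWπ i _ (huPiFl _ _ hv)
        have h2 : π i x = (sW.symm x) i := by
          conv_lhs => rw [← sW.apply_symm_apply x]
          exact hsWπ i _ hv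
        show π i (sW (uPi (sW.symm x))) = _
        rw [h1, uPi_apply, h2]
      refine Nat.card_congr (e1.trans (Equiv.subtypeEquiv (Equiv.mulRight h₀⁻¹) fun h => ?_))
      simp only [Equiv.coe_mulRight]
      constructor
      · rintro ⟨hflag, hsub⟩
        have hinvflag : ∀ j, (W j).map ((h₀⁻¹ : G) : Module.End Fq V) = W j := fun j =>
          FiltAux.map_unit_inv_eq (h₀_flag j)
        constructor
        · intro j
          show (W j).map ((h * h₀⁻¹ : G) : Module.End Fq V) = W j
          rw [Units.val_mul, Module.End.mul_eq_comp, Submodule.map_comp, hinvflag j, hflag j]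
        · intro i x hx
          have hz : ((h₀⁻¹ : G) : Module.End Fq V) x ∈ W i.castSucc :=
            FiltAux.unit_inv_apply_mem (h₀_flag i.castSucc) hx
          have e2 : π i (((h * h₀⁻¹ : G) : Module.End Fq V) x)
              = π i ((h : Module.End Fq V) (((h₀⁻¹ : G) : Module.End Fq V) x)) := by
            rw [Units.val_mul, Module.End.mul_apply]
          rw [e2, hsub i _ hz, ← h₀_sub i _ hz, FiltAux.unit_apply_inv]
      · rintro ⟨hflag, hsub⟩
        have hg : h = (h * h₀⁻¹) * h₀ := (inv_mul_cancel_right h h₀).symm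
        constructor
        · intro j
          conv_lhs => rw [hg]
          rw [Units.val_mul, Module.End.mul_eq_comp, Submodule.map_comp, h₀_flag j, hflag j]
        · intro i x hx
          have hx0 : (h₀ : Module.End Fq V) x ∈ W i.castSucc := by
            rw [← h₀_flag i.castSucc]; exact ⟨x, hx, rfl⟩
          have e2 : (h : Module.End Fq V) x
              = ((h * h₀⁻¹ : G) : Module.End Fq V) ((h₀ : Module.End Fq V) x) := by
            conv_lhs => rw [hg]
            rw [Units.val_mul, Module.End.mul_apply]
          rw [e2, hsub i _ hx0, h₀_sub i x hx]
    have hres := FiltAux.card_fibers φ3 _ key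
    rw [Nat.card_pi] at hres
    exact hres
  -- STEP 2 : |T| = |F| * |Q|
  have step2 : Nat.card {g : G // YN (cj g)} =
      Nat.card {f : Fin (m + 1) → Submodule Fq V // FP f} * Nat.card {h : G // QP h} := by
    have TtoF : ∀ g : G, YN (cj g) → FP (fun j => (W j).comap (g : Module.End Fq V)) := by
      intro g hg
      refine ⟨?_, ?_, ?_, ?_, ?_⟩
      · show (W 0).comap (g : Module.End Fq V) = ⊤
        rw [hW0]; exact Submodule.comap_top _
      · show (W (Fin.last m)).comap (g : Module.End Fq V) = ⊥
        rw [hWlast, Submodule.comap_bot]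
        exact LinearMap.ker_eq_bot.2 (FiltAux.unit_injective g)
      · intro i; exact Submodule.comap_mono (hWmono i)
      · rintro j a _ ⟨x, hx, rfl⟩
        show (g : Module.End Fq V) (ρM a x) ∈ W j
        have h1 : (g : Module.End Fq V) (ρM a x) = cj g a ((g : Module.End Fq V) x) := by
          rw [cj_app, FiltAux.unit_inv_apply]
        rw [h1]
        exact hg.1 j a ⟨_, hx, rfl⟩
      · intro i
        refine ⟨(π i).comp (g : Module.End Fq V), ?_, ?_, ?_⟩
        · rw [Submodule.map_comp, FiltAux.map_comap_unit, hπsurj i]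
        · rw [LinearMap.ker_comp, ← Submodule.comap_inf, hπker i]
        · intro a x hx
          show π i ((g : Module.End Fq V) (ρM a x)) = ρn i a (π i ((g : Module.End Fq V) x))
          have h1 : (g : Module.End Fq V) (ρM a x) = cj g a ((g : Module.End Fq V) x) := by
            rw [cj_app, FiltAux.unit_inv_apply]
          rw [h1]
          exact hg.2 i a _ hx
    let φ2 : {g : G // YN (cj g)} → {f : Fin (m + 1) → Submodule Fq V // FP f} :=
      fun g => ⟨fun j => (W j).comap (g.1 : Module.End Fq V), TtoF g.1 g.2⟩
    have key2 : ∀ f₀ : {f : Fin (m + 1) → Submodule Fq V // FP f},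
        Nat.card {p // φ2 p = f₀} = Nat.card {h : G // QP h} := by
      rintro ⟨f, hf⟩
      have hflast := hf.2.1
      have hfmono := hf.2.2.1
      have hfstab := hf.2.2.2.1
      choose p hp1 hp2 hp3 using hf.2.2.2.2
      obtain ⟨sf, hsfmap, hsfπ⟩ :=
        FiltAux.exists_adapted_equiv Fq V m Vn hdim f hflast hfmono p hp1 hp2
      let g₀ : G := FiltAux.eUnit (sf.symm.trans sW)
      have hsf_pre : ∀ (j : Fin (m + 1)) (x : V), x ∈ f j →
          sf.symm x ∈ FiltAux.Fl (Fq := Fq) Vn j := by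
        intro j x hx
        rw [← hsfmap j] at hx
        obtain ⟨v, hv, rfl⟩ := hx
        rw [show sf.symm ((sf : (∀ i, Vn i) →ₗ[Fq] V) v) = v from sf.symm_apply_apply v]
        exact hv
      have hsf_mem : ∀ (j : Fin (m + 1)) (v : ∀ i, Vn i),
          v ∈ FiltAux.Fl (Fq := Fq) Vn j → sf v ∈ f j := by
        intro j v hv
        rw [← hsfmap j]
        exact ⟨v, hv, rfl⟩
      have hg₀W : ∀ j, (W j).comap (g₀ : Module.End Fq V) = f j := by
        intro j; ext x
        constructor
        · intro hx
          have h1 : sW (sf.symm x) ∈ W j := hx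
          have h2 := hsW_pre j _ h1
          rw [show sW.symm (sW (sf.symm x)) = sf.symm x from sW.symm_apply_apply _] at h2
          have h3 := hsf_mem j _ h2
          rwa [sf.apply_symm_apply x] at h3
        · intro hx
          show sW (sf.symm x) ∈ W j
          exact hsW_memW j _ (hsf_pre j x hx)
      have hg₀f : ∀ j, (f j).map (g₀ : Module.End Fq V) = W j := by
        intro j; rw [← hg₀W j]; exact FiltAux.map_comap_unit g₀ (W j)
      have hg₀π : ∀ (i : Fin m) (z : V), z ∈ f i.castSucc →
          π i ((g₀ : Module.End Fq V) z) = p i z := by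
        intro i z hz
        rw [← hsfmap i.castSucc] at hz
        obtain ⟨v, hv, rfl⟩ := hz
        show π i (sW (sf.symm ((sf : (∀ k, Vn k) →ₗ[Fq] V) v))) = _
        rw [show sf.symm ((sf : (∀ k, Vn k) →ₗ[Fq] V) v) = v from sf.symm_apply_apply v,
          hsWπ i v hv]
        exact (hsfπ i v hv).symm
      have hg₀T : YN (cj g₀) := by
        constructor
        · rintro j a _ ⟨y, hy, rfl⟩
          show cj g₀ a y ∈ W j
          rw [cj_app]
          have h1 : ((g₀⁻¹ : G) : Module.End Fq V) y ∈ f j :=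
            FiltAux.unit_inv_apply_mem' (hg₀f j) hy
          have h2 : ρM a (((g₀⁻¹ : G) : Module.End Fq V) y) ∈ f j :=
            hfstab j a ⟨_, h1, rfl⟩
          rw [← hg₀f j]
          exact ⟨_, h2, rfl⟩
        · intro i a y hy
          rw [cj_app]
          have h1 : ((g₀⁻¹ : G) : Module.End Fq V) y ∈ f i.castSucc :=
            FiltAux.unit_inv_apply_mem' (hg₀f _) hy
          have h2 : ρM a (((g₀⁻¹ : G) : Module.End Fq V) y) ∈ f i.castSucc :=
            hfstab _ a ⟨_, h1, rfl⟩
          rw [hg₀π i _ h2, hp3 i a _ h1, ← hg₀π i _ h1, FiltAux.unit_apply_inv]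
      have fwd : ∀ g : G, YN (cj g) → (∀ j, (W j).comap (g : Module.End Fq V) = f j) →
          QP (g * g₀⁻¹) := by
        intro g hT hcom
        have hmapg : ∀ j, (f j).map (g : Module.End Fq V) = W j := by
          intro j; rw [← hcom j]; exact FiltAux.map_comap_unit g (W j)
        have hflag : ∀ j : Fin (m + 1),
            (W j).map ((g * g₀⁻¹ : G) : Module.End Fq V) = W j := by
          intro j
          rw [Units.val_mul, Module.End.mul_eq_comp, Submodule.map_comp,
            FiltAux.map_inv_eq_comap, hg₀W j, hmapg j]
        refine ⟨hflag, ?_⟩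
        intro i
        let uMap : Vn i →ₗ[Fq] Vn i :=
          (π i).comp ((((g * g₀⁻¹ : G) : Module.End Fq V)).comp
            (((sW : (∀ k, Vn k) →ₗ[Fq] V)).comp (LinearMap.single Fq Vn i)))
        have uMap_apply : ∀ v : Vn i, uMap v =
            π i (((g * g₀⁻¹ : G) : Module.End Fq V) (sW (Pi.single i v))) := fun v => rfl
        have hkey : ∀ x : V, x ∈ W i.castSucc →
            π i (((g * g₀⁻¹ : G) : Module.End Fq V) x) = uMap (π i x) := by
          intro x hx
          have hw := hsW_pre _ x hx
          have hπx : π i x = (sW.symm x) i := by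
            conv_lhs => rw [← sW.apply_symm_apply x]
            exact hsWπ i _ hw
          have hFl : sW.symm x - Pi.single i ((sW.symm x) i) ∈
              FiltAux.Fl (Fq := Fq) Vn i.succ := by
            intro k hk
            rcases eq_or_lt_of_le (Fin.castSucc_lt_succ_iff.1 hk) with heq | hlt
            · rw [Pi.sub_apply, heq, Pi.single_eq_same, sub_self]
            · rw [Pi.sub_apply, hw k (Fin.castSucc_lt_castSucc_iff.2 hlt),
                Pi.single_eq_of_ne (ne_of_lt hlt), sub_zero]
          have hdiff : x - sW (Pi.single i ((sW.symm x) i)) ∈ W i.succ := by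
            have hh := hsW_memW i.succ _ hFl
            rw [map_sub, sW.apply_symm_apply] at hh
            exact hh
          have hmem2 : ((g * g₀⁻¹ : G) : Module.End Fq V)
              (x - sW (Pi.single i ((sW.symm x) i))) ∈ W i.succ := by
            rw [← hflag i.succ]; exact ⟨_, hdiff, rfl⟩
          have hker2 : π i (((g * g₀⁻¹ : G) : Module.End Fq V)
              (x - sW (Pi.single i ((sW.symm x) i)))) = 0 :=
            hWsucc_ker i hmem2
          have hsplit : ((g * g₀⁻¹ : G) : Module.End Fq V) x =
              ((g * g₀⁻¹ : G) : Module.End Fq V) (sW (Pi.single i ((sW.symm x) i))) +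
              ((g * g₀⁻¹ : G) : Module.End Fq V)
                (x - sW (Pi.single i ((sW.symm x) i))) := by
            rw [← map_add]; congr 1; abel
          rw [hsplit, map_add, hker2, add_zero, hπx]
          exact (uMap_apply _).symm
        have hsurj : Function.Surjective uMap := by
          intro v'
          obtain ⟨y, hy, hyv⟩ := hπW i v'
          have hy2 : y ∈ (W i.castSucc).map ((g * g₀⁻¹ : G) : Module.End Fq V) := by
            rw [hflag]; exact hy
          obtain ⟨x, hx, hxy⟩ := hy2
          exact ⟨π i x, by rw [← hkey x hx, hxy, hyv]⟩
        have hinj : Function.Injective uMap := LinearMap.injective_iff_surjective.2 hsurj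
        let uu : (Module.End Fq (Vn i))ˣ :=
          FiltAux.eUnit (LinearEquiv.ofBijective uMap ⟨hinj, hsurj⟩)
        have uu_apply : ∀ v, (uu : Module.End Fq (Vn i)) v = uMap v := fun v => rfl
        refine ⟨uu, ?_, ?_⟩
        · intro a
          refine LinearMap.ext fun v => ?_
          obtain ⟨x, hx, rfl⟩ := hπW i v
          rw [Module.End.mul_apply, Module.End.mul_apply, uu_apply, uu_apply]
          have h1 : ρn i a (π i x) = π i (cj g₀ a x) := (hg₀T.2 i a x hx).symm
          have h2 : cj g₀ a x ∈ W i.castSucc := hg₀T.1 i.castSucc a ⟨x, hx, rfl⟩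
          have h3 : ((g * g₀⁻¹ : G) : Module.End Fq V) (cj g₀ a x) =
              cj g a (((g * g₀⁻¹ : G) : Module.End Fq V) x) := by
            rw [cj_app, cj_app, FiltAux.mul_unit_apply, FiltAux.mul_unit_apply,
              FiltAux.unit_inv_apply, FiltAux.unit_inv_apply]
          calc uMap (ρn i a (π i x))
              = uMap (π i (cj g₀ a x)) := by rw [h1]
            _ = π i (((g * g₀⁻¹ : G) : Module.End Fq V) (cj g₀ a x)) := (hkey _ h2).symm
            _ = π i (cj g a (((g * g₀⁻¹ : G) : Module.End Fq V) x)) := by rw [h3]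
            _ = ρn i a (π i (((g * g₀⁻¹ : G) : Module.End Fq V) x)) :=
                hT.2 i a _ (by rw [← hflag i.castSucc]; exact ⟨x, hx, rfl⟩)
            _ = ρn i a (uMap (π i x)) := by rw [hkey x hx]
        · intro x hx
          rw [hkey x hx]
          exact (uu_apply _).symm
      have bwd : ∀ h : G, QP h → YN (cj (h * g₀)) ∧
          (∀ j, (W j).comap ((h * g₀ : G) : Module.End Fq V) = f j) := by
        intro h hQ
        have hcom : ∀ j, (W j).comap ((h * g₀ : G) : Module.End Fq V) = f j := by
          intro j
          rw [Units.val_mul, Module.End.mul_eq_comp, Submodule.comap_comp,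
            FiltAux.comap_unit_eq_of_map_eq (hQ.1 j), hg₀W j]
        refine ⟨⟨?_, ?_⟩, hcom⟩
        · rintro j a _ ⟨y, hy, rfl⟩
          show cj (h * g₀) a y ∈ W j
          have hrep : cj (h * g₀) a y =
              (h : Module.End Fq V) (cj g₀ a (((h⁻¹ : G) : Module.End Fq V) y)) := by
            rw [cj_app, cj_app, mul_inv_rev, FiltAux.mul_unit_apply, FiltAux.mul_unit_apply]
          rw [hrep]
          have h1 := FiltAux.unit_inv_apply_mem (hQ.1 j) hy
          have h2 : cj g₀ a (((h⁻¹ : G) : Module.End Fq V) y) ∈ W j :=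
            hg₀T.1 j a ⟨_, h1, rfl⟩
          rw [← hQ.1 j]
          exact ⟨_, h2, rfl⟩
        · intro i a y hy
          obtain ⟨u, hu_comm, hu⟩ := hQ.2 i
          have hrep : cj (h * g₀) a y =
              (h : Module.End Fq V) (cj g₀ a (((h⁻¹ : G) : Module.End Fq V) y)) := by
            rw [cj_app, cj_app, mul_inv_rev, FiltAux.mul_unit_apply, FiltAux.mul_unit_apply]
          have h1 := FiltAux.unit_inv_apply_mem (hQ.1 i.castSucc) hy
          have h2 : cj g₀ a (((h⁻¹ : G) : Module.End Fq V) y) ∈ W i.castSucc :=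
            hg₀T.1 i.castSucc a ⟨_, h1, rfl⟩
          rw [hrep, hu _ h2, hg₀T.2 i a _ h1]
          have hc := congrArg (fun z : Module.End Fq (Vn i) =>
            z (π i (((h⁻¹ : G) : Module.End Fq V) y))) (hu_comm a)
          simp only [Module.End.mul_apply] at hc
          rw [hc, ← hu _ h1, FiltAux.unit_apply_inv]
      refine Nat.card_congr
        ⟨fun p => ⟨p.1.1 * g₀⁻¹,
            fwd p.1.1 p.1.2 (fun j => congrFun (congrArg Subtype.val p.2) j)⟩,
         fun q => ⟨⟨q.1 * g₀, (bwd q.1 q.2).1⟩, Subtype.ext (funext (bwd q.1 q.2).2)⟩,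
         fun p => Subtype.ext (Subtype.ext (inv_mul_cancel_right p.1.1 g₀)),
         fun q => Subtype.ext (mul_inv_cancel_right q.1 g₀)⟩
    exact FiltAux.card_fibers φ2 _ key2
  -- STEP 1 : |T| = |X| * a_M
  have step1 : Nat.card {g : G // YN (cj g)} =
      Nat.card {ρ : A →ₐ[Fq] Module.End Fq V //
        ((∀ (i : Fin (m + 1)) (a : A), (W i).map (ρ a) ≤ W i) ∧
         (∀ (i : Fin m) (a : A) (x : V), x ∈ W i.castSucc →
            π i (ρ a x) = ρn i a (π i x))) ∧
        (∃ g : (Module.End Fq V)ˣ, ∀ a : A,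
          ρ a = (g : Module.End Fq V) * ρM a * ((g⁻¹ : (Module.End Fq V)ˣ) :
            Module.End Fq V))} *
      Nat.card {g : (Module.End Fq V)ˣ //
        ∀ a : A, (g : Module.End Fq V) * ρM a = ρM a * g} := by
    let φ1 : {g : G // YN (cj g)} → {ρ : A →ₐ[Fq] Module.End Fq V //
        ((∀ (i : Fin (m + 1)) (a : A), (W i).map (ρ a) ≤ W i) ∧
         (∀ (i : Fin m) (a : A) (x : V), x ∈ W i.castSucc →
            π i (ρ a x) = ρn i a (π i x))) ∧
        (∃ g : (Module.End Fq V)ˣ, ∀ a : A,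
          ρ a = (g : Module.End Fq V) * ρM a * ((g⁻¹ : (Module.End Fq V)ˣ) :
            Module.End Fq V))} :=
      fun g => ⟨cj g.1, g.2, ⟨g.1, fun a => rfl⟩⟩
    have key1 : ∀ x, Nat.card {p // φ1 p = x} =
        Nat.card {g : (Module.End Fq V)ˣ //
          ∀ a : A, (g : Module.End Fq V) * ρM a = ρM a * g} := by
      rintro ⟨ρ, hρYN, g₁, hg₁⟩
      have hcj₁ : cj g₁ = ρ := AlgHom.ext fun a => (hg₁ a).symm
      refine Nat.card_congr
        ⟨fun p => ⟨g₁⁻¹ * p.1.1, fun a => ?_⟩,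
         fun q => ⟨⟨g₁ * q.1, ?_⟩, Subtype.ext ?_⟩, fun p => ?_, fun q => ?_⟩
      · have hc : cj p.1.1 = ρ := congrArg Subtype.val p.2
        have hca : (p.1.1 : Module.End Fq V) * ρM a *
            (((p.1.1)⁻¹ : G) : Module.End Fq V) =
            (g₁ : Module.End Fq V) * ρM a * ((g₁⁻¹ : G) : Module.End Fq V) := by
          rw [← cj_apply, ← cj_apply, hc, hcj₁]
        exact (FiltAux.units_conj_eq_iff _ _ _).1 hca
      · have hval : cj (g₁ * q.1) = ρ := by
          refine AlgHom.ext fun a => ?_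
          rw [cj_apply, ← hcj₁, cj_apply]
          have hq : g₁⁻¹ * (g₁ * q.1) = q.1 := inv_mul_cancel_left g₁ q.1
          exact (FiltAux.units_conj_eq_iff _ _ _).2 (by rw [hq]; exact q.2 a)
        exact cast (congrArg YN hval).symm hρYN
      · refine AlgHom.ext fun a => ?_
        show cj (g₁ * q.1) a = ρ a
        rw [cj_apply, ← hcj₁, cj_apply]
        have hq : g₁⁻¹ * (g₁ * q.1) = q.1 := inv_mul_cancel_left g₁ q.1
        exact (FiltAux.units_conj_eq_iff _ _ _).2 (by rw [hq]; exact q.2 a)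
      · exact Subtype.ext (Subtype.ext (mul_inv_cancel_left g₁ p.1.1))
      · exact Subtype.ext (inv_mul_cancel_left g₁ q.1)
    exact FiltAux.card_fibers φ1 _ key1
  show Nat.card {f : Fin (m + 1) → Submodule Fq V // FP f} * _ * _ = _
  rw [mul_assoc, ← step3, ← step2, step1, mul_comm]
end
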